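/- Let a > 0, b ∈ ℝ, σ > 0, let f₀(x) = √(a/(π σ²)) · exp(−a(x − b)²/σ²) be the N(b, σ²/(2a)) density with distribution function F₀(x) = ∫_{−∞}^{x} f₀(y) dy, and define Φ(x) = ∫_ℝ (𝟙{y > x} − F₀(y))² / (σ² f₀(y)) dy. Then lim_{x → ∞} (x − b) · exp(−a(x − b)²/σ²) · Φ(x) = σ√π/(2 a^{3/2}). -/

import Mathlib

open MeasureTheory Set Filter Topology ENNReal


lemma aux_deriv_gauss {k : ℝ} (hk : 0 < k) (b t : ℝ) :
    HasDerivAt (fun t => -(2*k)⁻¹ * Real.exp (-(k*(t-b)^2)))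
      ((t-b) * Real.exp (-(k*(t-b)^2))) t := by
  have h1 : HasDerivAt (fun t : ℝ => -(k*(t-b)^2)) (-(k*(2*(t-b)))) t := by
    have := (((hasDerivAt_id t).sub_const b).pow 2).const_mul k
    exact (by simpa using this : HasDerivAt (fun t : ℝ => k*(t-b)^2) (k*(2*(t-b))) t).neg
  have h2 := (h1.exp).const_mul (-(2*k)⁻¹)
  refine h2.congr_deriv ?_
  have hk0 : k ≠ 0 := hk.ne'
  field_simp

lemma aux_deriv_grow {k : ℝ} (hk : 0 < k) (b t : ℝ) :
    HasDerivAt (fun t => (2*k)⁻¹ * Real.exp (k*(t-b)^2))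
      ((t-b) * Real.exp (k*(t-b)^2)) t := by
  have h1 : HasDerivAt (fun t : ℝ => k*(t-b)^2) (k*(2*(t-b))) t := by
    simpa using (((hasDerivAt_id t).sub_const b).pow 2).const_mul k
  have h2 := (h1.exp).const_mul ((2*k)⁻¹)
  refine h2.congr_deriv ?_
  have hk0 : k ≠ 0 := hk.ne'
  field_simp

lemma aux_int_gauss {k : ℝ} (hk : 0 < k) (b : ℝ) :
    Integrable (fun t => Real.exp (-(k*(t-b)^2))) := by
  have := (integrable_exp_neg_mul_sq hk).comp_sub_right b
  simpa [neg_mul] using this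

lemma aux_int_mul_gauss {k : ℝ} (hk : 0 < k) (b : ℝ) :
    Integrable (fun t => (t-b) * Real.exp (-(k*(t-b)^2))) := by
  have := (integrable_mul_exp_neg_mul_sq hk).comp_sub_right b
  simpa [neg_mul] using this

lemma aux_tendsto_exp_zero {k : ℝ} (hk : 0 < k) (b : ℝ) :
    Tendsto (fun t : ℝ => Real.exp (-(k*(t-b)^2))) atTop (𝓝 0) := by
  apply Real.tendsto_exp_atBot.comp
  have h : Tendsto (fun t : ℝ => k*(t-b)^2) atTop atTop := by
    apply Tendsto.const_mul_atTop hk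
    exact (tendsto_pow_atTop (two_ne_zero)).comp (tendsto_atTop_add_const_right _ (-b) tendsto_id)
  exact tendsto_neg_atTop_atBot.comp h

lemma gauss_eval_right {k : ℝ} (hk : 0 < k) {b y : ℝ} :
    ∫ t in Ioi y, (t-b) * Real.exp (-(k*(t-b)^2)) = Real.exp (-(k*(y-b)^2))/(2*k) := by
  have h := integral_Ioi_of_hasDerivAt_of_tendsto' (a := y)
    (f := fun t => -(2*k)⁻¹ * Real.exp (-(k*(t-b)^2)))
    (f' := fun t => (t-b) * Real.exp (-(k*(t-b)^2)))
    (fun x _ => aux_deriv_gauss hk b x)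
    ((aux_int_mul_gauss hk b).integrableOn)
    (by simpa using ((aux_tendsto_exp_zero hk b).const_mul (-(2*k)⁻¹)))
  rw [h]
  field_simp
  ring

lemma gauss_tail_right {k : ℝ} (hk : 0 < k) {b y : ℝ} (hy : b < y) :
    ∫ t in Ioi y, Real.exp (-(k*(t-b)^2)) ≤ Real.exp (-(k*(y-b)^2))/(2*k*(y-b)) := by
  have hmono : ∫ t in Ioi y, Real.exp (-(k*(t-b)^2))
      ≤ ∫ t in Ioi y, (y-b)⁻¹ * ((t-b) * Real.exp (-(k*(t-b)^2))) := by
    apply setIntegral_mono_on ((aux_int_gauss hk b).integrableOn)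
      (((aux_int_mul_gauss hk b).const_mul _).integrableOn) measurableSet_Ioi
    intro t ht
    simp only [mem_Ioi] at ht
    rw [← mul_assoc]
    nth_rewrite 1 [← one_mul (Real.exp _)]
    apply mul_le_mul_of_nonneg_right _ (Real.exp_nonneg _)
    rw [inv_mul_eq_div, le_div_iff₀ (by linarith)]
    linarith
  rw [integral_const_mul, gauss_eval_right hk] at hmono
  calc ∫ t in Ioi y, Real.exp (-(k*(t-b)^2)) ≤ _ := hmono
    _ = Real.exp (-(k*(y-b)^2))/(2*k*(y-b)) := by field_simp

lemma gauss_tail_left {k : ℝ} (hk : 0 < k) {b y : ℝ} (hy : y < b) :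
    ∫ t in Iic y, Real.exp (-(k*(t-b)^2)) ≤ Real.exp (-(k*(y-b)^2))/(2*k*(b-y)) := by
  have h0 : ∫ t in Iic y, Real.exp (-(k*(t-b)^2))
      = ∫ x in Ioi (-y), Real.exp (-(k*(x-(-b))^2)) := by
    rw [← integral_comp_neg_Iic]
    congr 1; funext t; ring_nf
  rw [h0]
  have := gauss_tail_right hk (b := -b) (y := -y) (by linarith)
  calc ∫ x in Ioi (-y), Real.exp (-(k*(x-(-b))^2)) ≤ Real.exp (-(k*(-y-(-b))^2))/(2*k*(-y-(-b))) := this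
    _ = Real.exp (-(k*(y-b)^2))/(2*k*(b-y)) := by ring_nf

lemma ftc_grow {k : ℝ} (hk : 0 < k) {b M x : ℝ} (h : M ≤ x) :
    ∫ y in M..x, (y-b) * Real.exp (k*(y-b)^2)
      = (Real.exp (k*(x-b)^2) - Real.exp (k*(M-b)^2))/(2*k) := by
  have := intervalIntegral.integral_eq_sub_of_hasDerivAt
    (f := fun t => (2*k)⁻¹ * Real.exp (k*(t-b)^2))
    (f' := fun t => (t-b) * Real.exp (k*(t-b)^2))
    (fun t _ => aux_deriv_grow hk b t)
    (Continuous.intervalIntegrable (by continuity) M x)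
  rw [this]
  field_simp

lemma ftc_grow2 {k : ℝ} (hk : 0 < k) {b M x : ℝ} (hbM : b < M) (h : M ≤ x) :
    ∫ y in M..x, (1 - 1/(2*k*(y-b)^2)) * Real.exp (k*(y-b)^2)
      = Real.exp (k*(x-b)^2)/(2*k*(x-b)) - Real.exp (k*(M-b)^2)/(2*k*(M-b)) := by
  have huIcc : uIcc M x = Icc M x := uIcc_of_le h
  have hderiv : ∀ t ∈ uIcc M x,
      HasDerivAt (fun t => Real.exp (k*(t-b)^2) / (2*k*(t-b)))
        ((1 - 1/(2*k*(t-b)^2)) * Real.exp (k*(t-b)^2)) t := by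
    intro t ht
    rw [huIcc, mem_Icc] at ht
    have htb : 0 < t - b := by linarith [ht.1]
    have h1 : HasDerivAt (fun t : ℝ => k*(t-b)^2) (k*(2*(t-b))) t := by
      simpa using (((hasDerivAt_id t).sub_const b).pow 2).const_mul k
    have h2 : HasDerivAt (fun t : ℝ => Real.exp (k*(t-b)^2)) (Real.exp (k*(t-b)^2) * (k*(2*(t-b)))) t := h1.exp
    have h3 : HasDerivAt (fun t : ℝ => 2*k*(t-b)) (2*k) t := by
      simpa using ((hasDerivAt_id t).sub_const b).const_mul (2*k)
    have h4 := h2.div h3 (by positivity)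
    refine h4.congr_deriv ?_
    have hk0 : k ≠ 0 := hk.ne'
    have htb0 : t - b ≠ 0 := htb.ne'
    field_simp
  have hcont : IntervalIntegrable (fun t => (1 - 1/(2*k*(t-b)^2)) * Real.exp (k*(t-b)^2)) volume M x := by
    apply ContinuousOn.intervalIntegrable
    apply ContinuousOn.mul _ (Real.continuous_exp.comp (by continuity)).continuousOn
    apply ContinuousOn.sub continuousOn_const
    apply ContinuousOn.div continuousOn_const (Continuous.continuousOn (by continuity))
    intro t ht
    rw [huIcc, mem_Icc] at ht
    have : 0 < t - b := by linarith [ht.1]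
    positivity
  have := intervalIntegral.integral_eq_sub_of_hasDerivAt hderiv hcont
  rw [this]

lemma tendsto_mul_exp_neg {k : ℝ} (hk : 0 < k) (b : ℝ) :
    Tendsto (fun x => (x-b) * Real.exp (-(k*(x-b)^2))) atTop (𝓝 0) := by
  have hbig : Tendsto (fun x : ℝ => k⁻¹ * ((k*(x-b)) * Real.exp (-(k*(x-b))))) atTop (𝓝 0) := by
    have h1 : Tendsto (fun t : ℝ => t * Real.exp (-t)) atTop (𝓝 0) := by
      simpa using Real.tendsto_pow_mul_exp_neg_atTop_nhds_zero 1
    have h2 : Tendsto (fun x : ℝ => k*(x-b)) atTop atTop := by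
      apply Tendsto.const_mul_atTop hk
      exact tendsto_atTop_add_const_right _ (-b) tendsto_id
    simpa using ((h1.comp h2).const_mul k⁻¹)
  apply tendsto_of_tendsto_of_tendsto_of_le_of_le' tendsto_const_nhds hbig
  · filter_upwards [eventually_ge_atTop b] with x hx
    exact mul_nonneg (by linarith) (Real.exp_nonneg _)
  · filter_upwards [eventually_ge_atTop (b+1)] with x hx
    have h1 : (1:ℝ) ≤ x - b := by linarith
    have h2 : Real.exp (-(k*(x-b)^2)) ≤ Real.exp (-(k*(x-b))) := by
      apply Real.exp_le_exp.2
      have h3 : (x-b) ≤ (x-b)^2 := by nlinarith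
      have h4 := mul_le_mul_of_nonneg_left h3 hk.le
      linarith
    calc (x-b) * Real.exp (-(k*(x-b)^2)) ≤ (x-b) * Real.exp (-(k*(x-b))) := by
          apply mul_le_mul_of_nonneg_left h2 (by linarith)
      _ = k⁻¹ * ((k*(x-b)) * Real.exp (-(k*(x-b)))) := by field_simp

set_option maxHeartbeats 1000000 in
lemma lemS {k b : ℝ} (hk : 0 < k) {W : ℝ → ℝ}
    (hW0 : ∀ y, 0 ≤ W y) (hW1 : ∀ y, W y ≤ 1)
    (hWt : Tendsto W atTop (𝓝 1))
    (hint : ∀ x : ℝ, IntegrableOn (fun y => W y * Real.exp (k*(y-b)^2)) (Iic x)) :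
    Tendsto (fun x => (x-b) * Real.exp (-(k*(x-b)^2)) * ∫ y in Iic x, W y * Real.exp (k*(y-b)^2))
      atTop (𝓝 (1/(2*k))) := by
  rw [Metric.tendsto_nhds]
  intro ε hε
  set δ := min (1/2) (k*ε/4) with hδdef
  have hδpos : 0 < δ := lt_min (by norm_num) (by positivity)
  have hδhalf : δ ≤ 1/2 := min_le_left _ _
  have hδε : 2*δ < k*ε := by
    have h1 : δ ≤ k*ε/4 := min_le_right _ _
    nlinarith [mul_pos hk hε]
  -- choose M₀ where W ≥ 1 - δ
  obtain ⟨M₀, hM₀⟩ : ∃ M₀, ∀ y, M₀ ≤ y → 1 - δ ≤ W y := by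
    have := hWt.eventually (eventually_ge_nhds (show (1:ℝ) - δ < 1 by linarith))
    exact eventually_atTop.1 this
  set M := max M₀ (b + max 1 (1/(2*k*δ))) with hMdef
  have hbM1 : b + 1 ≤ M := by
    have : b + 1 ≤ b + max 1 (1/(2*k*δ)) := by
      have := le_max_left (1:ℝ) (1/(2*k*δ)); linarith
    exact le_trans this (le_max_right _ _)
  have hbM : b < M := by linarith
  have hM₀M : M₀ ≤ M := le_max_left _ _
  have hMδ : ∀ y : ℝ, M ≤ y → 1/(2*k*(y-b)^2) ≤ δ := by
    intro y hy
    have h1 : 1/(2*k*δ) ≤ y - b := by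
      have h2 : b + 1/(2*k*δ) ≤ b + max 1 (1/(2*k*δ)) := by
        have := le_max_right (1:ℝ) (1/(2*k*δ)); linarith
      have := le_trans h2 (le_max_right M₀ _)
      linarith
    have h2 : 1 ≤ y - b := by linarith
    have h3 : 1/(2*k*δ) ≤ (y-b)^2 := by nlinarith
    rw [div_le_iff₀ (by positivity)]
    rw [div_le_iff₀ (by positivity)] at h3
    nlinarith
  set C := ∫ y in Iic M, W y * Real.exp (k*(y-b)^2) with hCdef
  have hC0 : 0 ≤ C := setIntegral_nonneg measurableSet_Iic
    (fun y _ => mul_nonneg (hW0 y) (Real.exp_nonneg _))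
  have ev1 : ∀ᶠ x in atTop, Real.exp (k*(M-b)^2) * Real.exp (-(k*(x-b)^2)) ≤ δ := by
    have := (aux_tendsto_exp_zero hk b).const_mul (Real.exp (k*(M-b)^2))
    rw [mul_zero] at this
    exact this.eventually (eventually_le_nhds hδpos)
  have ev2 : ∀ᶠ x in atTop, C * ((x-b) * Real.exp (-(k*(x-b)^2))) ≤ δ/(2*k) := by
    have := (tendsto_mul_exp_neg hk b).const_mul C
    rw [mul_zero] at this
    exact this.eventually (eventually_le_nhds (by positivity))
  filter_upwards [eventually_ge_atTop M, ev1, ev2] with x hx hev1 hev2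
  -- notation
  set E := Real.exp (k*(x-b)^2) with hEdef
  set EM := Real.exp (k*(M-b)^2) with hEMdef
  set e := Real.exp (-(k*(x-b)^2)) with hedef
  have hEpos : 0 < E := Real.exp_pos _
  have hepos : 0 < e := Real.exp_pos _
  have hEMpos : 0 < EM := Real.exp_pos _
  have hEe : E * e = 1 := by rw [hEdef, hedef, ← Real.exp_add]; simp
  have hu1 : 1 ≤ x - b := by linarith
  have hu0 : 0 < x - b := by linarith
  have hcont1 : Continuous (fun y : ℝ => Real.exp (k*(y-b)^2)) := by fun_prop
  have hcont2 : Continuous (fun y : ℝ => (1-δ) * ((y-b) * Real.exp (k*(y-b)^2))) := by fun_prop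
  set J := ∫ y in M..x, W y * Real.exp (k*(y-b)^2) with hJdef
  -- split
  have hII : IntervalIntegrable (fun y => W y * Real.exp (k*(y-b)^2)) volume M x := by
    rw [intervalIntegrable_iff_integrableOn_Ioc_of_le hx]
    exact (hint x).mono_set (fun y hy => hy.2)
  have hsplit : ∫ y in Iic x, W y * Real.exp (k*(y-b)^2) = C + J := by
    have h := intervalIntegral.integral_Iic_sub_Iic (hint M) (hint x)
    rw [hCdef, hJdef]; linarith [h]
  -- lower bound for J
  have hJlow : (1-δ) * ((E - EM)/(2*k)) ≤ (x-b) * J := by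
    have hmono := intervalIntegral.integral_mono_on hx
      (Continuous.intervalIntegrable hcont2 M x)
      (hII.const_mul (x-b))
      (f := fun y => (1-δ) * ((y-b) * Real.exp (k*(y-b)^2)))
      (g := fun y => (x-b) * (W y * Real.exp (k*(y-b)^2)))
      ?_
    · rw [intervalIntegral.integral_const_mul, intervalIntegral.integral_const_mul,
        ftc_grow hk hx] at hmono
      exact hmono
    · intro y hy
      rw [mem_Icc] at hy
      have hWy : 1 - δ ≤ W y := hM₀ y (le_trans hM₀M hy.1)
      have hyx : y - b ≤ x - b := by linarith [hy.2]
      have hyb : 0 < y - b := by linarith [hy.1]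
      have hexp : 0 < Real.exp (k*(y-b)^2) := Real.exp_pos _
      have t1 : (1-δ)*(y-b) ≤ (1-δ)*(x-b) := by nlinarith
      have t2 : (1-δ)*(x-b) ≤ W y * (x-b) := by nlinarith
      nlinarith [mul_le_mul_of_nonneg_right (t1.trans t2) hexp.le]
  -- upper bound for J
  set K := ∫ y in M..x, Real.exp (k*(y-b)^2) with hKdef
  have hJK : J ≤ K := by
    apply intervalIntegral.integral_mono_on hx hII
      (Continuous.intervalIntegrable hcont1 M x)
    intro y _
    have := Real.exp_nonneg (k*(y-b)^2)
    nlinarith [hW1 y, hW0 y]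
  have hJ0 : 0 ≤ J := by
    apply intervalIntegral.integral_nonneg hx
    intro y _
    exact mul_nonneg (hW0 y) (Real.exp_nonneg _)
  have hKup : (1-δ) * K ≤ E/(2*k*(x-b)) := by
    have hmono := intervalIntegral.integral_mono_on (μ := volume) hx
      ((Continuous.intervalIntegrable hcont1 M x).const_mul (1-δ))
      ?_
      (f := fun y => (1-δ) * Real.exp (k*(y-b)^2))
      (g := fun y => (1 - 1/(2*k*(y-b)^2)) * Real.exp (k*(y-b)^2))
      ?_
    · rw [intervalIntegral.integral_const_mul, ftc_grow2 hk hbM hx] at hmono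
      have hAM : 0 ≤ EM/(2*k*(M-b)) := div_nonneg hEMpos.le (mul_nonneg (by linarith) (by linarith))
      calc (1-δ) * K ≤ E/(2*k*(x-b)) - EM/(2*k*(M-b)) := hmono
        _ ≤ E/(2*k*(x-b)) := by linarith
    · apply ContinuousOn.intervalIntegrable
      apply ContinuousOn.mul _ hcont1.continuousOn
      apply ContinuousOn.sub continuousOn_const
      apply ContinuousOn.div continuousOn_const (Continuous.continuousOn (by fun_prop))
      intro t ht
      rw [uIcc_of_le hx, mem_Icc] at ht
      have : 0 < t - b := by linarith [ht.1]
      positivity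
    · intro y hy
      rw [mem_Icc] at hy
      have h1 := hMδ y hy.1
      have hexp : 0 ≤ Real.exp (k*(y-b)^2) := Real.exp_nonneg _
      nlinarith
  -- combine
  rw [hsplit, Real.dist_eq, abs_sub_lt_iff]
  have hfx : (x-b) * e * (C + J) = C * ((x-b)*e) + ((x-b)*J)*e := by ring
  -- cleared versions
  have hKup' : (1-δ) * K * (2*k*(x-b)) ≤ E := by
    rw [← le_div_iff₀ (by positivity)]; exact hKup
  have h9 : (0:ℝ) < 1 - δ := by linarith
  have hkε : 0 < k * ε := mul_pos hk hε
  constructor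
  · -- upper
    have h7 : (x-b)*J*e ≤ (x-b)*K*e :=
      mul_le_mul_of_nonneg_right (mul_le_mul_of_nonneg_left hJK hu0.le) hepos.le
    have h8 : ((x-b)*K*e) * ((2*k)*(1-δ)) ≤ 1 := by
      calc ((x-b)*K*e) * ((2*k)*(1-δ)) = ((1-δ) * K * (2*k*(x-b))) * e := by ring
        _ ≤ E * e := mul_le_mul_of_nonneg_right hKup' hepos.le
        _ = 1 := hEe
    have h10 : (x-b)*K*e ≤ 1/((2*k)*(1-δ)) := by
      rw [le_div_iff₀ (by positivity)]; exact h8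
    have h11 : 1/((2*k)*(1-δ)) ≤ (1+2*δ)/(2*k) := by
      rw [div_le_div_iff₀ (by positivity) (by positivity)]
      nlinarith [mul_nonneg (mul_nonneg hδpos.le (by linarith : (0:ℝ) ≤ 1 - 2*δ)) hk.le]
    have h12 : (x-b)*e*(C+J) ≤ δ/(2*k) + (1+2*δ)/(2*k) := by
      have : (x-b)*e*(C+J) = C*((x-b)*e) + (x-b)*J*e := by ring
      rw [this]
      have := h7.trans (h10.trans h11)
      linarith [hev2]
    have h13 : δ/(2*k) + (1+2*δ)/(2*k) - 1/(2*k) = (3*δ)/(2*k) := by ring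
    have h14 : (3*δ)/(2*k) < ε := by
      rw [div_lt_iff₀ (by positivity)]
      nlinarith
    linarith
  · -- lower
    have h5 : (1-δ) * ((E - EM)/(2*k)) * e ≤ (x-b)*J*e :=
      mul_le_mul_of_nonneg_right hJlow hepos.le
    have h6 : (1-δ) * (1 - EM*e) ≤ (1-δ)*((E-EM)/(2*k))*e * (2*k) := by
      have heq : (1-δ)*((E-EM)/(2*k))*e*(2*k) = (1-δ)*((E*e) - EM*e) := by field_simp
      rw [heq, hEe]
    have h13 : (1-δ) * (1 - EM*e) ≤ ((x-b)*J*e)*(2*k) :=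
      h6.trans (mul_le_mul_of_nonneg_right h5 (by positivity))
    have h12 : (1-2*δ)/(2*k) ≤ (x-b)*J*e := by
      rw [div_le_iff₀ (by positivity)]
      nlinarith [mul_le_mul_of_nonneg_left hev1 h9.le]
    have hCe0 : 0 ≤ C * ((x-b)*e) := by positivity
    have h15 : (1-2*δ)/(2*k) ≤ (x-b)*e*(C+J) := by
      have : (x-b)*e*(C+J) = C*((x-b)*e) + (x-b)*J*e := by ring
      rw [this]; linarith
    have h16 : 1/(2*k) - (1-2*δ)/(2*k) = (2*δ)/(2*k) := by ring
    have h17 : (2*δ)/(2*k) < ε := by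
      rw [div_lt_iff₀ (by positivity)]
      nlinarith
    linarith

set_option maxHeartbeats 1000000 in
theorem stmt_13
    (a b σ : ℝ) (ha : 0 < a) (hσ : 0 < σ)
    (f₀ : ℝ → ℝ)
    (hf₀ : ∀ x, f₀ x = Real.sqrt (a / (Real.pi * σ ^ 2)) *
        Real.exp (-a * (x - b) ^ 2 / σ ^ 2))
    (F₀ : ℝ → ℝ) (hF₀ : ∀ x, F₀ x = ∫ y in Iic x, f₀ y)
    (Φ : ℝ → ℝ≥0∞)
    (hΦ : ∀ x, Φ x = ∫⁻ y, ENNReal.ofReal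
        (((Ioi x).indicator (fun _ => (1 : ℝ)) y - F₀ y) ^ 2 / (σ ^ 2 * f₀ y))) :
    Tendsto (fun x => (x - b) * Real.exp (-a * (x - b) ^ 2 / σ ^ 2) * (Φ x).toReal)
      atTop (𝓝 (σ * Real.sqrt Real.pi / (2 * a ^ ((3 : ℝ) / 2)))) := by
  have hπ := Real.pi_pos
  set k := a/σ^2 with hkdef
  have hk : 0 < k := by positivity
  set c := Real.sqrt (a/(Real.pi*σ^2)) with hcdef
  have hc : 0 < c := Real.sqrt_pos.2 (by positivity)
  have hexpeq : ∀ x : ℝ, -a * (x-b)^2 / σ^2 = -(k*(x-b)^2) := by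
    intro x; rw [hkdef]; ring
  have hf₀' : ∀ y, f₀ y = c * Real.exp (-(k*(y-b)^2)) := by
    intro y; rw [hf₀ y, hexpeq y]
  have hf₀fun : f₀ = fun y => c * Real.exp (-(k*(y-b)^2)) := funext hf₀'
  have hf₀pos : ∀ y, 0 < f₀ y := fun y => by rw [hf₀' y]; positivity
  have hf₀cont : Continuous f₀ := by rw [hf₀fun]; fun_prop
  have hf₀int : Integrable f₀ := by
    rw [hf₀fun]; exact (aux_int_gauss hk b).const_mul c
  have hee : ∀ u : ℝ, Real.exp (k*u) * Real.exp (-(k*u)) = 1 := by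
    intro u; rw [← Real.exp_add]; simp
  have htot : ∫ y, f₀ y = 1 := by
    rw [hf₀fun, integral_const_mul]
    have h1 : ∫ t : ℝ, Real.exp (-(k*(t-b)^2)) = Real.sqrt (Real.pi/k) := by
      have h := integral_sub_right_eq_self (μ := volume) (fun t : ℝ => Real.exp (-(k*t^2))) b
      rw [h]
      simpa [neg_mul] using integral_gaussian k
    rw [h1, hcdef, hkdef, ← Real.sqrt_mul (by positivity)]
    rw [show a/(Real.pi*σ^2) * (Real.pi/(a/σ^2)) = 1 by field_simp]
    exact Real.sqrt_one
  have hF₀0 : ∀ y, 0 ≤ F₀ y := by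
    intro y; rw [hF₀ y]
    exact setIntegral_nonneg measurableSet_Iic (fun t _ => (hf₀pos t).le)
  have hF₀1 : ∀ y, F₀ y ≤ 1 := by
    intro y; rw [hF₀ y, ← htot]
    exact setIntegral_le_integral hf₀int (Eventually.of_forall (fun t => (hf₀pos t).le))
  have hF₀tendsto : Tendsto F₀ atTop (𝓝 1) := by
    have h := tendsto_setIntegral_of_monotone (f := f₀) (μ := volume)
      (s := fun x : ℝ => Iic x) (fun _ => measurableSet_Iic)
      (fun i j hij => Iic_subset_Iic.2 hij)
      (by rw [iUnion_Iic]; exact integrableOn_univ.2 hf₀int)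
    rw [iUnion_Iic, Measure.restrict_univ, htot] at h
    exact h.congr (fun x => (hF₀ x).symm)
  have hF₀cont : Continuous F₀ := by
    have heq : F₀ = fun x => (∫ y in Iic (0:ℝ), f₀ y) + ∫ y in (0:ℝ)..x, f₀ y := by
      funext x
      have h := intervalIntegral.integral_Iic_sub_Iic (a := (0:ℝ)) (b := x)
        hf₀int.integrableOn hf₀int.integrableOn
      rw [hF₀ x]; linarith
    rw [heq]
    exact continuous_const.add
      (intervalIntegral.continuous_primitive (fun a b => hf₀int.intervalIntegrable) 0)
  have hright : ∀ y, 1 - F₀ y = ∫ t in Ioi y, f₀ t := by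
    intro y
    have h := intervalIntegral.integral_Iic_add_Ioi (b := y) hf₀int.integrableOn hf₀int.integrableOn
    rw [htot] at h; rw [hF₀ y]; linarith
  have htail : ∀ y, b+1 ≤ y → 1 - F₀ y ≤ c * Real.exp (-(k*(y-b)^2)) / (2*k) := by
    intro y hy
    rw [hright y, hf₀fun, integral_const_mul]
    have h1 := gauss_tail_right hk (b := b) (y := y) (by linarith)
    have h2 : Real.exp (-(k*(y-b)^2))/(2*k*(y-b)) ≤ Real.exp (-(k*(y-b)^2))/(2*k) := by
      apply div_le_div_of_nonneg_left (Real.exp_nonneg _) (by positivity)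
      nlinarith
    calc c * ∫ t in Ioi y, Real.exp (-(k*(t-b)^2))
        ≤ c * (Real.exp (-(k*(y-b)^2))/(2*k*(y-b))) := by
          exact mul_le_mul_of_nonneg_left h1 hc.le
      _ ≤ c * (Real.exp (-(k*(y-b)^2))/(2*k)) := mul_le_mul_of_nonneg_left h2 hc.le
      _ = c * Real.exp (-(k*(y-b)^2)) / (2*k) := by ring
  have hleft : ∀ y, y ≤ b-1 → F₀ y ≤ c * Real.exp (-(k*(y-b)^2)) / (2*k) := by
    intro y hy
    rw [hF₀ y, hf₀fun, integral_const_mul]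
    have h1 := gauss_tail_left hk (b := b) (y := y) (by linarith)
    have h2 : Real.exp (-(k*(y-b)^2))/(2*k*(b-y)) ≤ Real.exp (-(k*(y-b)^2))/(2*k) := by
      apply div_le_div_of_nonneg_left (Real.exp_nonneg _) (by positivity)
      nlinarith
    calc c * ∫ t in Iic y, Real.exp (-(k*(t-b)^2))
        ≤ c * (Real.exp (-(k*(y-b)^2))/(2*k*(b-y))) := mul_le_mul_of_nonneg_left h1 hc.le
      _ ≤ c * (Real.exp (-(k*(y-b)^2))/(2*k)) := mul_le_mul_of_nonneg_left h2 hc.le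
      _ = c * Real.exp (-(k*(y-b)^2)) / (2*k) := by ring
  have hcontW : Continuous (fun y : ℝ => (F₀ y)^2 * Real.exp (k*(y-b)^2)) := by fun_prop
  have hWint : ∀ x : ℝ, IntegrableOn (fun y => (F₀ y)^2 * Real.exp (k*(y-b)^2)) (Iic x) := by
    intro x
    have hsub : Iic x ⊆ Iic (min x (b-1)) ∪ Icc (min x (b-1)) x := by
      intro y hy
      rcases le_or_gt y (min x (b-1)) with h | h
      · exact Or.inl h
      · exact Or.inr ⟨h.le, hy⟩
    apply IntegrableOn.mono_set _ hsub
    apply IntegrableOn.union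
    · apply Integrable.mono' (g := fun y => (c/(2*k))^2 * Real.exp (-(k*(y-b)^2)))
        (((aux_int_gauss hk b).const_mul _).integrableOn)
        hcontW.aestronglyMeasurable.restrict
      rw [ae_restrict_iff' measurableSet_Iic]
      apply ae_of_all
      intro y hy
      rw [mem_Iic] at hy
      have hyb : y ≤ b - 1 := le_trans hy (min_le_right _ _)
      have h1 := hleft y hyb
      have h0 := hF₀0 y
      have hexp2 : Real.exp (-(k*(y-b)^2))^2 * Real.exp (k*(y-b)^2) = Real.exp (-(k*(y-b)^2)) := by
        rw [sq, mul_assoc, ← Real.exp_add, ← Real.exp_add]; ring_nf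
      have hsq : (F₀ y)^2 ≤ (c * Real.exp (-(k*(y-b)^2))/(2*k))^2 :=
        pow_le_pow_left₀ h0 h1 2
      rw [Real.norm_eq_abs, abs_of_nonneg (by positivity)]
      calc (F₀ y)^2 * Real.exp (k*(y-b)^2)
          ≤ (c * Real.exp (-(k*(y-b)^2))/(2*k))^2 * Real.exp (k*(y-b)^2) := by
            exact mul_le_mul_of_nonneg_right hsq (Real.exp_nonneg _)
        _ = (c/(2*k))^2 * (Real.exp (-(k*(y-b)^2))^2 * Real.exp (k*(y-b)^2)) := by ring
        _ = (c/(2*k))^2 * Real.exp (-(k*(y-b)^2)) := by rw [hexp2]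
    · exact hcontW.integrableOn_Icc
  -- tail integrand
  have hcontT : Continuous (fun y : ℝ => (1 - F₀ y)^2 / (σ^2 * f₀ y)) := by
    apply Continuous.div (by fun_prop) (continuous_const.mul hf₀cont)
    intro y
    have := hf₀pos y
    exact (mul_pos (pow_pos hσ 2) this).ne'
  have hTptw : ∀ y : ℝ, b+1 ≤ y →
      (1 - F₀ y)^2 / (σ^2 * f₀ y) ≤ c/(4*k^2*σ^2) * Real.exp (-(k*(y-b)^2)) := by
    intro y hy
    have h1 : 0 ≤ 1 - F₀ y := by linarith [hF₀1 y]
    have h2 := htail y hy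
    have hsq : (1 - F₀ y)^2 ≤ (c * Real.exp (-(k*(y-b)^2))/(2*k))^2 := pow_le_pow_left₀ h1 h2 2
    have hfy := hf₀pos y
    rw [div_le_iff₀ (by positivity)]
    have heq : c/(4*k^2*σ^2) * Real.exp (-(k*(y-b)^2)) * (σ^2 * f₀ y)
        = (c * Real.exp (-(k*(y-b)^2))/(2*k))^2 := by
      rw [hf₀' y]; field_simp; ring
    rw [heq]; exact hsq
  have hTnonneg : ∀ y : ℝ, 0 ≤ (1 - F₀ y)^2 / (σ^2 * f₀ y) := by
    intro y; have := hf₀pos y; positivity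
  have hTint : ∀ x : ℝ, IntegrableOn (fun y => (1 - F₀ y)^2 / (σ^2 * f₀ y)) (Ioi x) := by
    intro x
    have hsub : Ioi x ⊆ Icc x (max x (b+1)) ∪ Ioi (max x (b+1)) := by
      intro y hy
      rcases le_or_gt y (max x (b+1)) with h | h
      · exact Or.inl ⟨le_of_lt hy, h⟩
      · exact Or.inr h
    apply IntegrableOn.mono_set _ hsub
    apply IntegrableOn.union
    · exact hcontT.integrableOn_Icc
    · apply Integrable.mono' (g := fun y => c/(4*k^2*σ^2) * Real.exp (-(k*(y-b)^2)))
        (((aux_int_gauss hk b).const_mul _).integrableOn)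
        hcontT.aestronglyMeasurable.restrict
      rw [ae_restrict_iff' measurableSet_Ioi]
      apply ae_of_all
      intro y hy
      rw [mem_Ioi] at hy
      have hyb : b + 1 ≤ y := le_of_lt (lt_of_le_of_lt (le_max_right x (b+1)) hy)
      rw [Real.norm_eq_abs, abs_of_nonneg (hTnonneg y)]
      exact hTptw y hyb
  -- tail part tends to zero
  set T := fun x => ∫ y in Ioi x, (1 - F₀ y)^2 / (σ^2 * f₀ y) with hTdef
  have hT0 : ∀ x, 0 ≤ T x := fun x =>
    setIntegral_nonneg measurableSet_Ioi (fun y _ => hTnonneg y)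
  have hTup : ∀ x : ℝ, b+1 ≤ x →
      T x ≤ c/(4*k^2*σ^2) * (Real.exp (-(k*(x-b)^2))/(2*k*(x-b))) := by
    intro x hx
    have h1 : T x ≤ ∫ y in Ioi x, c/(4*k^2*σ^2) * Real.exp (-(k*(y-b)^2)) := by
      apply setIntegral_mono_on (hTint x)
        (((aux_int_gauss hk b).const_mul _).integrableOn) measurableSet_Ioi
      intro y hy
      rw [mem_Ioi] at hy
      exact hTptw y (by linarith)
    rw [integral_const_mul] at h1
    calc T x ≤ _ := h1
      _ ≤ c/(4*k^2*σ^2) * (Real.exp (-(k*(x-b)^2))/(2*k*(x-b))) := by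
        apply mul_le_mul_of_nonneg_left (gauss_tail_right hk (by linarith)) (by positivity)
  have htail0 : Tendsto (fun x => (x-b) * Real.exp (-(k*(x-b)^2)) * T x) atTop (𝓝 0) := by
    have hg : Tendsto (fun x : ℝ => c/(8*k^3*σ^2) * Real.exp (-(k*(x-b)^2))^2) atTop (𝓝 0) := by
      have h2 := (aux_tendsto_exp_zero hk b).pow 2
      rw [show (0:ℝ)^2 = 0 by norm_num] at h2
      simpa using h2.const_mul (c/(8*k^3*σ^2))
    apply tendsto_of_tendsto_of_tendsto_of_le_of_le' tendsto_const_nhds hg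
    · filter_upwards [eventually_ge_atTop b] with x hx
      have h1 : 0 ≤ x - b := by linarith
      exact mul_nonneg (mul_nonneg h1 (Real.exp_nonneg _)) (hT0 x)
    · filter_upwards [eventually_ge_atTop (b+1)] with x hx
      have hxb : (0:ℝ) < x - b := by linarith
      have h1 := hTup x hx
      calc (x-b) * Real.exp (-(k*(x-b)^2)) * T x
          ≤ (x-b) * Real.exp (-(k*(x-b)^2)) *
            (c/(4*k^2*σ^2) * (Real.exp (-(k*(x-b)^2))/(2*k*(x-b)))) := by
            apply mul_le_mul_of_nonneg_left h1 (by positivity)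
        _ = c/(8*k^3*σ^2) * Real.exp (-(k*(x-b)^2))^2 := by field_simp; ring
  -- the integrand of Φ
  set h : ℝ → ℝ → ℝ :=
    fun x y => ((Ioi x).indicator (fun _ => (1:ℝ)) y - F₀ y)^2 / (σ^2 * f₀ y) with hhdef
  have hEqIic : ∀ x : ℝ, EqOn (fun y => (σ^2*c)⁻¹ * ((F₀ y)^2 * Real.exp (k*(y-b)^2)))
      (h x) (Iic x) := by
    intro x y hy
    rw [mem_Iic] at hy
    have hni : y ∉ Ioi x := by rw [mem_Ioi]; exact not_lt.2 hy
    simp only [hhdef, indicator_of_notMem hni]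
    rw [hf₀' y, Real.exp_neg]
    have h1 : Real.exp (k*(y-b)^2) ≠ 0 := Real.exp_ne_zero _
    field_simp
    ring
  have hEqIoi : ∀ x : ℝ, EqOn (fun y => (1 - F₀ y)^2 / (σ^2 * f₀ y)) (h x) (Ioi x) := by
    intro x y hy
    simp only [hhdef, indicator_of_mem hy]
  have hhnn : ∀ x y, 0 ≤ h x y := by
    intro x y; have := hf₀pos y
    simp only [hhdef]
    positivity
  have hhint : ∀ x, Integrable (h x) := by
    intro x
    rw [← integrableOn_univ, ← Iic_union_Ioi (a := x)]
    exact IntegrableOn.union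
      (IntegrableOn.congr_fun ((hWint x).const_mul ((σ^2*c)⁻¹)) (hEqIic x) measurableSet_Iic)
      (IntegrableOn.congr_fun (hTint x) (hEqIoi x) measurableSet_Ioi)
  have hΦval : ∀ x, (Φ x).toReal = ∫ y, h x y := by
    intro x
    rw [hΦ x, ← ofReal_integral_eq_lintegral_ofReal (hhint x) (ae_of_all _ (hhnn x)),
      ENNReal.toReal_ofReal (integral_nonneg (hhnn x))]
  have hsplitInt : ∀ x, ∫ y, h x y
      = (σ^2*c)⁻¹ * (∫ y in Iic x, (F₀ y)^2 * Real.exp (k*(y-b)^2)) + T x := by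
    intro x
    rw [← intervalIntegral.integral_Iic_add_Ioi (b := x)
      (IntegrableOn.congr_fun ((hWint x).const_mul ((σ^2*c)⁻¹)) (hEqIic x) measurableSet_Iic)
      (IntegrableOn.congr_fun (hTint x) (hEqIoi x) measurableSet_Ioi)]
    congr 1
    · rw [← setIntegral_congr_fun measurableSet_Iic (hEqIic x), integral_const_mul]
    · rw [← setIntegral_congr_fun measurableSet_Ioi (hEqIoi x)]
  -- main part via lemS
  have hmain := lemS hk (W := fun y => (F₀ y)^2)
    (fun y => sq_nonneg _) (fun y => pow_le_one₀ (hF₀0 y) (hF₀1 y))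
    (by simpa using hF₀tendsto.pow 2) hWint
  have hfinal := (hmain.const_mul ((σ^2*c)⁻¹)).add htail0
  beta_reduce at hfinal
  have hval : (σ^2*c)⁻¹ * (1/(2*k)) + 0 = σ * Real.sqrt Real.pi / (2*a^((3:ℝ)/2)) := by
    rw [add_zero, hcdef, hkdef]
    have h32 : a^((3:ℝ)/2) = a * Real.sqrt a := by
      rw [show (3:ℝ)/2 = 1 + 1/2 by norm_num, Real.rpow_add ha, Real.rpow_one,
        ← Real.sqrt_eq_rpow]
    rw [h32, Real.sqrt_div ha.le, Real.sqrt_mul hπ.le, Real.sqrt_sq hσ.le]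
    have hsa : 0 < Real.sqrt a := Real.sqrt_pos.2 ha
    have hsπ : 0 < Real.sqrt Real.pi := Real.sqrt_pos.2 hπ
    field_simp
  rw [hval] at hfinal
  apply hfinal.congr
  intro x
  rw [hexpeq x, hΦval x, hsplitInt x]
  ring
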